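/- For every n ∈ ℕ, the product U_n · U^{-1} equals the (n+1)×(n+1) identity matrix, where U_n is the weight matrix of the U-type network of order n and U^{-1} is the weight matrix of the same network under the inverse weighting. -/

import Mathlib

/-- The heights of a `U^m_n`-path of order `n` (the abscissas `x i = m + i` are
determined, so only the heights `y i ∈ {0, …, n}`, encoded as `Fin (n+1)`, are recorded):
`y (k+1) ∈ {y k, y k + 1}` and a rise step at position `k` forces `y k ≥ k`. -/
def IsUPath (n : ℕ) (y : Fin (n + 1) → Fin (n + 1)) : Prop :=
  ∀ k : Fin n,
    ((y k.succ = y k.castSucc ∨ (y k.succ : ℕ) = (y k.castSucc : ℕ) + 1) ∧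
      ((y k.succ : ℕ) = (y k.castSucc : ℕ) + 1 → (k : ℕ) ≤ (y k.castSucc : ℕ)))

/-- The weight of a `U`-type path: a rise step from `(k, j)` to `(k+1, j+1)` has weight
`t (j - k) (j + 1)` and a horizontal step has weight `1`; the weight of the path is the
product of the weights of its steps. -/
def uweight {R : Type*} [CommRing R] (n : ℕ) (t : ℕ → ℕ → R)
    (y : Fin (n + 1) → Fin (n + 1)) : R :=
  ∏ k : Fin n,
    if (y k.succ : ℕ) = (y k.castSucc : ℕ) + 1
    then t ((y k.castSucc : ℕ) - (k : ℕ)) ((y k.castSucc : ℕ) + 1) else 1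

open scoped Classical in
/-- The matrix `U n`: its `(i, j)` entry is the sum of the weights of all `U^0_n`-paths
with `y 0 = i` and `y n = j`. -/
noncomputable def Umat {R : Type*} [CommRing R] (n : ℕ) (t : ℕ → ℕ → R) :
    Matrix (Fin (n + 1)) (Fin (n + 1)) R :=
  Matrix.of fun i j =>
    ∑ y ∈ Finset.univ.filter
        (fun y : Fin (n + 1) → Fin (n + 1) => IsUPath n y ∧ y 0 = i ∧ y (Fin.last n) = j),
      uweight n t y

/-- The inverse weighting of a `U`-type path: a rise step from `(k, j-1)` to
`(k+1, j)` has weight `-t k j` and a horizontal step has weight `1`; the weight of the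
path is the product of the weights of its steps. -/
def uinvweight {R : Type*} [CommRing R] (n : ℕ) (t : ℕ → ℕ → R)
    (y : Fin (n + 1) → Fin (n + 1)) : R :=
  ∏ k : Fin n,
    if (y k.succ : ℕ) = (y k.castSucc : ℕ) + 1
    then -t (k : ℕ) (y k.succ : ℕ) else 1

open scoped Classical in
/-- The matrix `U⁻¹`: its `(i, j)` entry is the sum of the inverse weights of all
`U^0_n`-paths with `y 0 = i` and `y n = j`. -/
noncomputable def UinvMat {R : Type*} [CommRing R] (n : ℕ) (t : ℕ → ℕ → R) :
    Matrix (Fin (n + 1)) (Fin (n + 1)) R :=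
  Matrix.of fun i j =>
    ∑ y ∈ Finset.univ.filter
        (fun y : Fin (n + 1) → Fin (n + 1) => IsUPath n y ∧ y 0 = i ∧ y (Fin.last n) = j),
      uinvweight n t y

namespace UAux
open scoped Classical
variable {R : Type*} [CommRing R]

/-- A superdiagonal matrix with entries given by `f`. -/
def sdiag (n : ℕ) (f : ℕ → R) : Matrix (Fin (n+1)) (Fin (n+1)) R :=
  Matrix.of fun a b => if (b : ℕ) = (a : ℕ) + 1 then f (a : ℕ) else 0

/-- A unit upper-bidiagonal matrix. -/
def Bd (n : ℕ) (f : ℕ → R) : Matrix (Fin (n+1)) (Fin (n+1)) R := 1 + sdiag n f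

lemma sdiag_mul_apply (n : ℕ) (f g : ℕ → R) (a b : Fin (n+1)) :
    (sdiag n f * sdiag n g) a b
      = if (b : ℕ) = (a : ℕ) + 1 + 1 then f (a : ℕ) * g ((a : ℕ) + 1) else 0 := by
  rw [Matrix.mul_apply]
  have h1 : ∀ c : Fin (n+1), sdiag n f a c * sdiag n g c b
      = if (c : ℕ) = (a : ℕ) + 1 then
          (if (b : ℕ) = (a : ℕ) + 1 + 1 then f (a : ℕ) * g ((a : ℕ) + 1) else 0) else 0 := by
    intro c
    simp only [sdiag, Matrix.of_apply]
    by_cases hc : (c : ℕ) = (a : ℕ) + 1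
    · rw [if_pos hc, if_pos hc, hc]
      split_ifs <;> ring
    · rw [if_neg hc, if_neg hc, zero_mul]
  rw [Finset.sum_congr rfl (fun c _ => h1 c)]
  rw [Fin.sum_univ_eq_sum_range
    (fun c => if c = (a : ℕ) + 1 then
      (if (b : ℕ) = (a : ℕ) + 1 + 1 then f (a : ℕ) * g ((a : ℕ) + 1) else 0) else 0)]
  rw [Finset.sum_ite_eq' (Finset.range (n+1)) ((a : ℕ) + 1)]
  by_cases h : (a : ℕ) + 1 ∈ Finset.range (n+1)
  · rw [if_pos h]
  · rw [if_neg h, if_neg]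
    have := b.isLt
    simp only [Finset.mem_range] at h
    omega

lemma Bd_mul_Bd (n : ℕ) (f g f' g' : ℕ → R)
    (H1 : ∀ a, f a + g a = f' a + g' a)
    (H2 : ∀ a, f a * g (a + 1) = f' a * g' (a + 1)) :
    Bd n f * Bd n g = Bd n f' * Bd n g' := by
  ext a b
  simp only [Bd, add_mul, mul_add, one_mul, mul_one, Matrix.add_apply, sdiag_mul_apply]
  simp only [sdiag, Matrix.of_apply]
  split_ifs
  · exfalso; omega
  · linear_combination H1 (a : ℕ)
  · linear_combination H2 (a : ℕ)
  · rfl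

lemma Bd_congr (n : ℕ) (f g : ℕ → R) (H : ∀ a < n, f a = g a) : Bd n f = Bd n g := by
  ext a b
  simp only [Bd, Matrix.add_apply, sdiag, Matrix.of_apply]
  split_ifs with h
  · rw [H (a : ℕ) (by have := b.isLt; omega)]
  · rfl

lemma Bd_one (n : ℕ) (f : ℕ → R) (H : ∀ a < n, f a = 0) : Bd n f = 1 := by
  rw [Bd_congr n f (fun _ => 0) H]
  have : sdiag n (fun _ => (0 : R)) = 0 := by
    ext a b; simp [sdiag]
  rw [Bd, this, add_zero]

/-- The transfer matrix at step `j` for the `U` weighting, restricted to rows `≥ m`. -/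
def Emat (n : ℕ) (t : ℕ → ℕ → R) (j m : ℕ) : Matrix (Fin (n+1)) (Fin (n+1)) R :=
  Bd n (fun a => if m ≤ a then t (a - j) (a + 1) else 0)

/-- The transfer matrix at step `i` for the inverse weighting, restricted to rows `< m`. -/
def Fmat (n : ℕ) (t : ℕ → ℕ → R) (i m : ℕ) : Matrix (Fin (n+1)) (Fin (n+1)) R :=
  Bd n (fun a => if i ≤ a ∧ a < m then -t i (a + 1) else 0)

lemma EF_comm (n : ℕ) (t : ℕ → ℕ → R) (i j m : ℕ) (hm : m = i + j) :
    Emat n t j m * Fmat n t i (m + 1) = Fmat n t i m * Emat n t j (m + 1) := by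
  apply Bd_mul_Bd
  · intro a
    split_ifs
    all_goals try (exfalso; omega)
    all_goals try ring
    · have hai : a - j = i := by omega
      rw [hai]; ring
  · intro a
    split_ifs <;> first | (exfalso; omega) | ring

lemma pass (n : ℕ) (t : ℕ → ℕ → R) (j : ℕ) : ∀ k : ℕ,
    Emat n t j j * ((List.range k).map (fun i => Fmat n t i (j + 1 + i))).prod
      = ((List.range k).map (fun i => Fmat n t i (j + i))).prod * Emat n t j (j + k) := by
  intro k
  induction k with
  | zero => simp
  | succ k ih =>
    rw [List.range_succ, List.map_append, List.prod_append, List.map_append, List.prod_append]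
    simp only [List.map_cons, List.map_nil, List.prod_cons, List.prod_nil, mul_one]
    rw [← mul_assoc, ih, mul_assoc]
    rw [show j + 1 + k = (j + k) + 1 from by omega]
    rw [EF_comm n t k j (j + k) (by omega)]
    rw [← mul_assoc]
    rw [show j + (k + 1) = (j + k) + 1 from by omega]

lemma Emat_top (n : ℕ) (t : ℕ → ℕ → R) (j : ℕ) : Emat n t j n = 1 := by
  apply Bd_one; intro a ha; rw [if_neg (by omega)]

lemma Fmat_bot (n : ℕ) (t : ℕ → ℕ → R) (i m : ℕ) (h : m ≤ i) : Fmat n t i m = 1 := by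
  apply Bd_one; intro a _; rw [if_neg (by omega)]

lemma chain (n : ℕ) (t : ℕ → ℕ → R) : ∀ k : ℕ, k ≤ n →
    ((List.range n).map (fun j => Emat n t j j)).prod
        * ((List.range k).map (fun i => Fmat n t i n)).prod
      = ((List.range (n - k)).map (fun j => Emat n t j j)).prod
        * ((List.range k).map (fun i => Fmat n t i (n - k + i))).prod := by
  intro k
  induction k with
  | zero => simp
  | succ k ih =>
    intro hk
    set j0 := n - (k + 1) with hj0
    calc ((List.range n).map (fun j => Emat n t j j)).prod
        * ((List.range (k+1)).map (fun i => Fmat n t i n)).prod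
        = ((List.range n).map (fun j => Emat n t j j)).prod
            * ((List.range k).map (fun i => Fmat n t i n)).prod * Fmat n t k n := by
          rw [List.range_succ, List.map_append, List.prod_append]
          simp [mul_assoc]
      _ = ((List.range (n-k)).map (fun j => Emat n t j j)).prod
            * ((List.range k).map (fun i => Fmat n t i (n - k + i))).prod * Fmat n t k n := by
          rw [ih (by omega)]
      _ = (((List.range j0).map (fun j => Emat n t j j)).prod * Emat n t j0 j0)
            * ((List.range k).map (fun i => Fmat n t i (j0 + 1 + i))).prod
            * Fmat n t k (j0 + 1 + k) := by
          congr 2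
          · rw [show n - k = j0 + 1 from by omega, List.range_succ, List.map_append,
              List.prod_append]
            simp
          · apply congrArg List.prod
            apply List.map_congr_left
            intro i _
            have : n - k + i = j0 + 1 + i := by omega
            rw [this]
          · omega
      _ = ((List.range j0).map (fun j => Emat n t j j)).prod
            * (Emat n t j0 j0
              * ((List.range (k+1)).map (fun i => Fmat n t i (j0 + 1 + i))).prod) := by
          rw [List.range_succ, List.map_append, List.prod_append]
          simp [mul_assoc]
      _ = ((List.range j0).map (fun j => Emat n t j j)).prod
            * (((List.range (k+1)).map (fun i => Fmat n t i (j0 + i))).prod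
              * Emat n t j0 (j0 + (k+1))) := by
          rw [pass]
      _ = ((List.range (n - (k+1))).map (fun j => Emat n t j j)).prod
            * ((List.range (k+1)).map (fun i => Fmat n t i (n - (k+1) + i))).prod := by
          rw [show j0 + (k + 1) = n from by omega, Emat_top, mul_one]

lemma chain_full (n : ℕ) (t : ℕ → ℕ → R) :
    ((List.range n).map (fun j => Emat n t j j)).prod
        * ((List.range n).map (fun i => Fmat n t i n)).prod = 1 := by
  rw [chain n t n le_rfl]
  simp only [Nat.sub_self, List.range_zero, List.map_nil, List.prod_nil, one_mul, zero_add]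
  apply List.prod_eq_one
  intro x hx
  simp only [List.mem_map, List.mem_range] at hx
  obtain ⟨i, _, rfl⟩ := hx
  exact Fmat_bot n t i i le_rfl

/-- The matrix whose `(i,j)` entry is the `w`-weighted sum over all monotone-step
sequences of length `m` from `i` to `j`. -/
noncomputable def pathMat (n m : ℕ) (w : ℕ → Fin (n+1) → Fin (n+1) → R) :
    Matrix (Fin (n+1)) (Fin (n+1)) R :=
  Matrix.of fun i j => ∑ y : Fin (m+1) → Fin (n+1),
    if y 0 = i ∧ y (Fin.last m) = j then
      ∏ k : Fin m, w (k : ℕ) (y k.castSucc) (y k.succ) else 0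

lemma pathMat_zero (n : ℕ) (w : ℕ → Fin (n+1) → Fin (n+1) → R) :
    pathMat n 0 w = 1 := by
  ext i j
  simp only [pathMat, Matrix.of_apply]
  rw [← Equiv.sum_comp (Equiv.funUnique (Fin 1) (Fin (n+1))).symm]
  simp only [Equiv.funUnique_symm_apply]
  by_cases hij : i = j
  · subst hij
    rw [Finset.sum_congr rfl (fun s _ => by
      show (if (fun _ => s) (0 : Fin 1) = i ∧ (fun _ => s) (Fin.last 0) = i then
        ∏ k : Fin 0, w (k : ℕ) _ _ else 0) = if s = i then 1 else 0
      simp [and_self])]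
    simp [Matrix.one_apply]
  · rw [Finset.sum_congr rfl (fun s _ => by
      show (if (fun _ => s) (0 : Fin 1) = i ∧ (fun _ => s) (Fin.last 0) = j then
        ∏ k : Fin 0, w (k : ℕ) _ _ else 0) = 0
      simp only [Fin.prod_univ_zero]
      rw [if_neg]
      rintro ⟨rfl, rfl⟩
      exact hij rfl)]
    simp [Matrix.one_apply, hij]

lemma pathMat_succ (n m : ℕ) (w : ℕ → Fin (n+1) → Fin (n+1) → R) :
    pathMat n (m+1) w
      = Matrix.of (fun a b => w 0 a b) * pathMat n m (fun k => w (k+1)) := by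
  ext i j
  simp only [pathMat, Matrix.of_apply, Matrix.mul_apply]
  rw [← Equiv.sum_comp (Fin.consEquiv (fun _ : Fin (m+2) => Fin (n+1)))]
  rw [Fintype.sum_prod_type]
  simp only [Fin.consEquiv, Equiv.coe_fn_mk]
  have key : ∀ (s : Fin (n+1)) (y' : Fin (m+1) → Fin (n+1)),
      (if (Fin.cons s y' : Fin (m+2) → Fin (n+1)) 0 = i ∧
          (Fin.cons s y' : Fin (m+2) → Fin (n+1)) (Fin.last (m+1)) = j then
        ∏ k : Fin (m+1), w (k : ℕ)
          ((Fin.cons s y' : Fin (m+2) → Fin (n+1)) k.castSucc)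
          ((Fin.cons s y' : Fin (m+2) → Fin (n+1)) k.succ) else 0)
      = if s = i then
          (if y' (Fin.last m) = j then
            w 0 i (y' 0) * ∏ k : Fin m, w ((k : ℕ)+1) (y' k.castSucc) (y' k.succ) else 0)
        else 0 := by
    intro s y'
    have hlast : (Fin.cons s y' : Fin (m+2) → Fin (n+1)) (Fin.last (m+1)) = y' (Fin.last m) := by
      rw [show Fin.last (m+1) = (Fin.last m).succ from rfl, Fin.cons_succ]
    have h0 : (Fin.cons s y' : Fin (m+2) → Fin (n+1)) 0 = s := Fin.cons_zero _ _
    rw [hlast, h0]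
    have hprod : (∏ k : Fin (m+1), w (k : ℕ)
          ((Fin.cons s y' : Fin (m+2) → Fin (n+1)) k.castSucc)
          ((Fin.cons s y' : Fin (m+2) → Fin (n+1)) k.succ))
        = w 0 s (y' 0) * ∏ k : Fin m, w ((k : ℕ)+1) (y' k.castSucc) (y' k.succ) := by
      rw [Fin.prod_univ_succ]
      simp only [Fin.castSucc_zero, Fin.cons_zero, Fin.val_zero, ← Fin.succ_castSucc,
        Fin.cons_succ, Fin.val_succ]
    rw [hprod, ite_and]
    by_cases hs : s = i
    · subst hs; rfl
    · rw [if_neg hs, if_neg hs]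
  refine (Finset.sum_congr rfl (fun s _ => Finset.sum_congr rfl (fun y' _ => key s y'))).trans ?_
  rw [Finset.sum_comm]
  rw [Finset.sum_congr rfl (fun y' _ => Finset.sum_ite_eq' Finset.univ i _)]
  simp only [Finset.mem_univ, if_pos]
  have L2 : ∀ y' : Fin (m+1) → Fin (n+1),
      (∑ h : Fin (n+1), w 0 i h *
        (if y' 0 = h ∧ y' (Fin.last m) = j then
          ∏ k : Fin m, w ((k : ℕ)+1) (y' k.castSucc) (y' k.succ) else 0))
      = (if y' (Fin.last m) = j then
          w 0 i (y' 0) * ∏ k : Fin m, w ((k : ℕ)+1) (y' k.castSucc) (y' k.succ) else 0) := by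
    intro y'
    simp only [mul_ite, mul_zero, ite_and]
    rw [Finset.sum_ite_eq Finset.univ (y' 0)
      (fun h => if y' (Fin.last m) = j then
        w 0 i h * ∏ k : Fin m, w ((k : ℕ)+1) (y' k.castSucc) (y' k.succ) else 0)]
    simp only [Finset.mem_univ, if_pos]
  calc (∑ y' : Fin (m+1) → Fin (n+1),
        if y' (Fin.last m) = j then
          w 0 i (y' 0) * ∏ k : Fin m, w ((k : ℕ)+1) (y' k.castSucc) (y' k.succ) else 0)
      = ∑ y' : Fin (m+1) → Fin (n+1), ∑ h : Fin (n+1), w 0 i h *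
          (if y' 0 = h ∧ y' (Fin.last m) = j then
            ∏ k : Fin m, w ((k : ℕ)+1) (y' k.castSucc) (y' k.succ) else 0) := by
        exact (Finset.sum_congr rfl (fun y' _ => (L2 y').symm))
    _ = ∑ h : Fin (n+1), ∑ y' : Fin (m+1) → Fin (n+1), w 0 i h *
          (if y' 0 = h ∧ y' (Fin.last m) = j then
            ∏ k : Fin m, w ((k : ℕ)+1) (y' k.castSucc) (y' k.succ) else 0) :=
        Finset.sum_comm
    _ = ∑ h : Fin (n+1), w 0 i h * ∑ y' : Fin (m+1) → Fin (n+1),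
          (if y' 0 = h ∧ y' (Fin.last m) = j then
            ∏ k : Fin m, w ((k : ℕ)+1) (y' k.castSucc) (y' k.succ) else 0) := by
        exact Finset.sum_congr rfl (fun h _ => (Finset.mul_sum _ _ _).symm)

lemma pathMat_prod (n : ℕ) : ∀ (m : ℕ) (w : ℕ → Fin (n+1) → Fin (n+1) → R),
    pathMat n m w
      = ((List.range m).map
          (fun k => (Matrix.of (w k) : Matrix (Fin (n+1)) (Fin (n+1)) R))).prod := by
  intro m
  induction m with
  | zero => intro w; simp [pathMat_zero]
  | succ m ih =>
    intro w
    rw [pathMat_succ, ih, List.range_succ_eq_map, List.map_cons, List.prod_cons, List.map_map]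
    rfl

/-- The step weights of the `U` weighting. -/
noncomputable def wUgen (n : ℕ) (t : ℕ → ℕ → R) : ℕ → Fin (n+1) → Fin (n+1) → R :=
  fun k a b => if b = a then 1
    else if (b : ℕ) = (a : ℕ) + 1 ∧ k ≤ (a : ℕ) then t ((a : ℕ) - k) ((a : ℕ) + 1) else 0

/-- The step weights of the inverse weighting. -/
noncomputable def wVgen (n : ℕ) (t : ℕ → ℕ → R) : ℕ → Fin (n+1) → Fin (n+1) → R :=
  fun k a b => if b = a then 1
    else if (b : ℕ) = (a : ℕ) + 1 ∧ k ≤ (a : ℕ) then -t k (b : ℕ) else 0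

lemma of_wUgen (n : ℕ) (t : ℕ → ℕ → R) (k : ℕ) :
    (Matrix.of (wUgen n t k) : Matrix (Fin (n+1)) (Fin (n+1)) R) = Emat n t k k := by
  ext a b
  simp only [Matrix.of_apply, wUgen, Emat, Bd, Matrix.add_apply, sdiag, Matrix.one_apply]
  by_cases hab : b = a
  · subst hab
    rw [if_pos rfl, if_pos rfl, if_neg (by omega), add_zero]
  · rw [if_neg hab, if_neg (show ¬a = b from fun h => hab h.symm), zero_add]
    split_ifs <;> first | rfl | (exfalso; omega)

lemma of_wVgen (n : ℕ) (t : ℕ → ℕ → R) (k : ℕ) :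
    (Matrix.of (wVgen n t k) : Matrix (Fin (n+1)) (Fin (n+1)) R) = Fmat n t k n := by
  ext a b
  simp only [Matrix.of_apply, wVgen, Fmat, Bd, Matrix.add_apply, sdiag, Matrix.one_apply]
  by_cases hab : b = a
  · subst hab
    rw [if_pos rfl, if_pos rfl, if_neg (by omega), add_zero]
  · rw [if_neg hab, if_neg (show ¬a = b from fun h => hab h.symm), zero_add]
    have hb := b.isLt
    split_ifs with h1 h2 h3
    all_goals try rfl
    all_goals try (exfalso; omega)
    rw [h1.1]

end UAux

/-- The product of the weight matrix `U n` of the `U`-type network of order `n` with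
the weight matrix `U⁻¹` of the same network under the inverse weighting is the
`(n+1) × (n+1)` identity matrix. -/
theorem stmt18 {R : Type*} [CommRing R] (n : ℕ) (t : ℕ → ℕ → R) :
    Umat n t * UinvMat n t = 1 := by
  classical
  have hU : Umat n t = UAux.pathMat n n (UAux.wUgen n t) := by
    ext i j
    simp only [Umat, UAux.pathMat, Matrix.of_apply]
    rw [Finset.sum_filter]
    apply Finset.sum_congr rfl
    intro y _
    by_cases hP : y 0 = i ∧ y (Fin.last n) = j
    · rw [if_pos hP]
      by_cases hUp : IsUPath n y
      · rw [if_pos ⟨hUp, hP⟩]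
        unfold uweight UAux.wUgen
        apply Finset.prod_congr rfl
        intro k _
        obtain ⟨hstep, hge⟩ := hUp k
        rcases hstep with heq | hval
        · rw [heq]
          rw [if_neg (by omega), if_pos rfl]
        · have hne : y k.succ ≠ y k.castSucc := by
            intro h; rw [h] at hval; omega
          rw [if_pos hval, if_neg hne, if_pos ⟨hval, hge hval⟩]
      · rw [if_neg (fun h => hUp h.1)]
        symm
        unfold IsUPath at hUp
        push_neg at hUp
        obtain ⟨k, hk⟩ := hUp
        apply Finset.prod_eq_zero (Finset.mem_univ k)
        unfold UAux.wUgen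
        by_cases h1 : y k.succ = y k.castSucc
        · exfalso
          obtain ⟨hs, -⟩ := hk (Or.inl h1)
          rw [h1] at hs
          omega
        · rw [if_neg h1]
          by_cases h2 : (y k.succ : ℕ) = (y k.castSucc : ℕ) + 1
          · obtain ⟨-, hle⟩ := hk (Or.inr h2)
            rw [if_neg (fun hc => absurd hc.2 (by omega))]
          · rw [if_neg (fun hc => h2 hc.1)]
    · rw [if_neg (fun h => hP h.2), if_neg hP]
  have hV : UinvMat n t = UAux.pathMat n n (UAux.wVgen n t) := by
    ext i j
    simp only [UinvMat, UAux.pathMat, Matrix.of_apply]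
    rw [Finset.sum_filter]
    apply Finset.sum_congr rfl
    intro y _
    by_cases hP : y 0 = i ∧ y (Fin.last n) = j
    · rw [if_pos hP]
      by_cases hUp : IsUPath n y
      · rw [if_pos ⟨hUp, hP⟩]
        unfold uinvweight UAux.wVgen
        apply Finset.prod_congr rfl
        intro k _
        obtain ⟨hstep, hge⟩ := hUp k
        rcases hstep with heq | hval
        · rw [heq]
          rw [if_neg (by omega), if_pos rfl]
        · have hne : y k.succ ≠ y k.castSucc := by
            intro h; rw [h] at hval; omega
          rw [if_pos hval, if_neg hne, if_pos ⟨hval, hge hval⟩]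
      · rw [if_neg (fun h => hUp h.1)]
        symm
        unfold IsUPath at hUp
        push_neg at hUp
        obtain ⟨k, hk⟩ := hUp
        apply Finset.prod_eq_zero (Finset.mem_univ k)
        unfold UAux.wVgen
        by_cases h1 : y k.succ = y k.castSucc
        · exfalso
          obtain ⟨hs, -⟩ := hk (Or.inl h1)
          rw [h1] at hs
          omega
        · rw [if_neg h1]
          by_cases h2 : (y k.succ : ℕ) = (y k.castSucc : ℕ) + 1
          · obtain ⟨-, hle⟩ := hk (Or.inr h2)
            rw [if_neg (fun hc => absurd hc.2 (by omega))]
          · rw [if_neg (fun hc => h2 hc.1)]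
    · rw [if_neg (fun h => hP h.2), if_neg hP]
  rw [hU, hV, UAux.pathMat_prod, UAux.pathMat_prod]
  have e1 : ((List.range n).map
      (fun k => (Matrix.of (UAux.wUgen n t k) : Matrix (Fin (n+1)) (Fin (n+1)) R)))
      = (List.range n).map (fun k => UAux.Emat n t k k) := by
    apply List.map_congr_left
    intro k _
    exact UAux.of_wUgen n t k
  have e2 : ((List.range n).map
      (fun k => (Matrix.of (UAux.wVgen n t k) : Matrix (Fin (n+1)) (Fin (n+1)) R)))
      = (List.range n).map (fun k => UAux.Fmat n t k n) := by
    apply List.map_congr_left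
    intro k _
    exact UAux.of_wVgen n t k
  rw [e1, e2]
  exact UAux.chain_full n t
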